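/- Let R = ℤ and let c₁, …, c_k ∈ ℤ with b ∈ ⟨c₁,…,c_k⟩. Then there exist a₁, …, a_k ∈ ℤ with b = a₁c₁ + … + a_k c_k such that for each i, either aᵢcᵢ = 0 or aᵢcᵢ ∉ ⟨c₁,…,c_{i−1}⟩. -/

import Mathlib

/-- Division in the ground ring `ℤ`: any `b` in the ideal generated by `c₁,…,c_k` admits a
representation `b = Σ aᵢcᵢ` in which each summand `aᵢcᵢ` is either zero or does not lie in
the ideal generated by the earlier generators. -/
theorem int_division_in_ground_ring {k : ℕ} (c : Fin k → ℤ) (b : ℤ)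
    (hb : b ∈ Ideal.span (Set.range c)) :
    ∃ a : Fin k → ℤ, b = ∑ i, a i * c i ∧
      ∀ i, a i * c i = 0 ∨ a i * c i ∉ Ideal.span (c '' {j | j < i}) := by
  induction k generalizing b with
  | zero =>
    refine ⟨0, ?_, fun i => i.elim0⟩
    simp only [Set.range_eq_empty, Ideal.span_empty, Ideal.mem_bot] at hb
    simp [hb]
  | succ n ih =>
    have hrange : Set.range c = insert (c (Fin.last n)) (Set.range (c ∘ Fin.castSucc)) := by
      ext x
      simp only [Set.mem_range, Set.mem_insert_iff, Function.comp_apply]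
      constructor
      · rintro ⟨j, rfl⟩
        rcases Fin.eq_castSucc_or_eq_last j with ⟨j', rfl⟩ | rfl
        · exact Or.inr ⟨j', rfl⟩
        · exact Or.inl rfl
      · rintro (rfl | ⟨j, rfl⟩)
        exacts [⟨_, rfl⟩, ⟨_, rfl⟩]
    have hlastimg : c '' {j | j < Fin.last n} = Set.range (c ∘ Fin.castSucc) := by
      ext x
      simp only [Set.mem_image, Set.mem_setOf_eq, Set.mem_range, Function.comp_apply]
      constructor
      · rintro ⟨j, hj, rfl⟩
        obtain ⟨j', rfl⟩ := Fin.exists_castSucc_eq.mpr hj.ne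
        exact ⟨j', rfl⟩
      · rintro ⟨j, rfl⟩
        exact ⟨_, Fin.castSucc_lt_last j, rfl⟩
    have himg : ∀ j : Fin n,
        c '' {j' | j' < Fin.castSucc j} = (c ∘ Fin.castSucc) '' {j' | j' < j} := by
      intro j
      ext x
      simp only [Set.mem_image, Set.mem_setOf_eq, Function.comp_apply]
      constructor
      · rintro ⟨j', hj', rfl⟩
        have hne : j' ≠ Fin.last n := (hj'.trans (Fin.castSucc_lt_last j)).ne
        obtain ⟨j'', rfl⟩ := Fin.exists_castSucc_eq.mpr hne
        exact ⟨j'', Fin.castSucc_lt_castSucc_iff.mp hj', rfl⟩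
      · rintro ⟨j', hj', rfl⟩
        exact ⟨_, Fin.castSucc_lt_castSucc_iff.mpr hj', rfl⟩
    by_cases hmem : b ∈ Ideal.span (Set.range (c ∘ Fin.castSucc))
    · obtain ⟨a', ha'sum, ha'cond⟩ := ih (c ∘ Fin.castSucc) b hmem
      simp only [Function.comp_apply] at ha'sum
      refine ⟨Fin.snoc a' 0, ?_, ?_⟩
      · rw [Fin.sum_univ_castSucc]
        simp only [Fin.snoc_castSucc, Fin.snoc_last, zero_mul, add_zero]
        exact ha'sum
      · intro i
        rcases Fin.eq_castSucc_or_eq_last i with ⟨j, rfl⟩ | rfl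
        · rw [Fin.snoc_castSucc, himg j]
          exact ha'cond j
        · left; simp
    · rw [hrange] at hb
      rw [Ideal.span_insert, Submodule.mem_sup] at hb
      obtain ⟨y, hy, z, hz, rfl⟩ := hb
      obtain ⟨t, rfl⟩ := Ideal.mem_span_singleton'.mp hy
      obtain ⟨a', ha'sum, ha'cond⟩ := ih (c ∘ Fin.castSucc) z hz
      simp only [Function.comp_apply] at ha'sum
      refine ⟨Fin.snoc a' t, ?_, ?_⟩
      · rw [Fin.sum_univ_castSucc]
        simp only [Fin.snoc_castSucc, Fin.snoc_last]
        rw [← ha'sum]; ring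
      · intro i
        rcases Fin.eq_castSucc_or_eq_last i with ⟨j, rfl⟩ | rfl
        · rw [Fin.snoc_castSucc, himg j]
          exact ha'cond j
        · right
          rw [Fin.snoc_last, hlastimg]
          intro hcon
          exact hmem (by simpa using Ideal.add_mem _ hcon hz)
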